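/- arXiv:1007.4371 — 2 statements merged into one kernel-verified Lean document; each statement's English description precedes it below -/
import Mathlib

section
/- Spencer weight splitting identity: given a game state v = (V_0, …, V_t) with question vector u = (U_0, …, U_t) where U_i ⊆ V_i for all i, and remaining-questions parameter r = n - j ≥ 1, the sum of the Spencer weights (computed with parameter r-1) of the 'Yes' state ((U_0, U_1 ∪ (V_0 \ U_0), …, U_t ∪ (V_{t-1} \ U_{t-1}))) and the 'No' state ((V_0 \ U_0, (V_1 \ U_1) ∪ U_0, …, (V_t \ U_t) ∪ U_{t-1})) equals the Spencer weight of v computed with parameter r. -/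
/-- Spencer weight with `r` questions remaining of a state with bins `v 0, …, v t`. -/
def spencerWeight {α : Type*} [DecidableEq α] (t r : ℕ) (v : ℕ → Finset α) : ℕ :=
  ∑ i ∈ Finset.range (t + 1), (v i).card * ∑ ℓ ∈ Finset.range (t - i + 1), r.choose ℓ

/-- Update of a state after a "Yes" answer to the question `u`. -/
def yesState {α : Type*} [DecidableEq α] (v u : ℕ → Finset α) : ℕ → Finset α :=
  fun i => if i = 0 then u 0 else u i ∪ (v (i - 1) \ u (i - 1))

/-- Update of a state after a "No" answer to the question `u`. -/
def noState {α : Type*} [DecidableEq α] (v u : ℕ → Finset α) : ℕ → Finset α :=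
  fun i => if i = 0 then v 0 \ u 0 else (v i \ u i) ∪ u (i - 1)

lemma pascal_sum (m k : ℕ) :
    ∑ ℓ ∈ Finset.range (k+1), (m+1).choose ℓ
      = ∑ ℓ ∈ Finset.range (k+1), m.choose ℓ + ∑ ℓ ∈ Finset.range k, m.choose ℓ := by
  induction k with
  | zero => simp
  | succ k ih =>
    rw [Finset.sum_range_succ, ih, Finset.sum_range_succ (fun ℓ => m.choose ℓ) (k+1),
      Finset.sum_range_succ (fun ℓ => m.choose ℓ) k, Nat.choose_succ_succ]
    ring

/-- Spencer weight splitting identity: the Spencer weights (with parameter `r-1`)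
of the Yes-state and the No-state sum to the Spencer weight of `v` with parameter `r`. -/
theorem spencer_weight_split {α : Type*} [DecidableEq α] (t r : ℕ) (hr : 1 ≤ r)
    (v u : ℕ → Finset α)
    (hdisj : ∀ i j, i ≠ j → Disjoint (v i) (v j))
    (hsub : ∀ i, u i ⊆ v i) :
    spencerWeight t (r - 1) (yesState v u) + spencerWeight t (r - 1) (noState v u)
      = spencerWeight t r v := by
  obtain ⟨s, rfl⟩ : ∃ s, r = s + 1 := ⟨r - 1, by omega⟩
  have hcard : ∀ i, (u i).card + (v i \ u i).card = (v i).card := fun i => by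
    rw [Finset.card_sdiff_of_subset (hsub i)]
    have := Finset.card_le_card (hsub i); omega
  have hyes : ∀ i : ℕ, (u (i+1) ∪ (v i \ u i)).card
      = (u (i+1)).card + (v i \ u i).card := fun i =>
    Finset.card_union_of_disjoint
      ((hdisj (i+1) i (by omega)).mono (hsub (i+1)) Finset.sdiff_subset)
  have hno : ∀ i : ℕ, ((v (i+1) \ u (i+1)) ∪ u i).card
      = (v (i+1) \ u (i+1)).card + (u i).card := fun i =>
    Finset.card_union_of_disjoint
      ((hdisj (i+1) i (by omega)).mono Finset.sdiff_subset (hsub i))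
  simp only [spencerWeight, yesState, noState, Nat.add_sub_cancel]
  conv_lhs => rw [Finset.sum_range_succ' _ t, Finset.sum_range_succ' _ t]
  simp only [Nat.add_eq_zero, one_ne_zero, and_false, if_false, if_true, Nat.add_sub_cancel,
    hyes, hno]
  -- rewrite the RHS using Pascal
  have key : ∀ i ∈ Finset.range (t+1),
      (v i).card * (∑ ℓ ∈ Finset.range (t - i + 1), (s+1).choose ℓ)
        = (v i).card * (∑ ℓ ∈ Finset.range (t - i + 1), s.choose ℓ)
          + (v i).card * (∑ ℓ ∈ Finset.range (t - i), s.choose ℓ) := by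
    intro i _
    rw [pascal_sum, Nat.mul_add]
  rw [Finset.sum_congr rfl key, Finset.sum_add_distrib,
    Finset.sum_range_succ' (fun i => (v i).card * ∑ ℓ ∈ Finset.range (t - i + 1), s.choose ℓ) t,
    Finset.sum_range_succ (fun i => (v i).card * ∑ ℓ ∈ Finset.range (t - i), s.choose ℓ) t]
  simp only [Nat.sub_self, Finset.range_zero, Finset.sum_empty, Nat.mul_zero, Nat.add_zero]
  have e1 : ∀ i ∈ Finset.range t,
      ((u (i+1)).card + (v i \ u i).card) * (∑ ℓ ∈ Finset.range (t - (i+1) + 1), s.choose ℓ)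
      + ((v (i+1) \ u (i+1)).card + (u i).card) * (∑ ℓ ∈ Finset.range (t - (i+1) + 1), s.choose ℓ)
      = (v (i+1)).card * (∑ ℓ ∈ Finset.range (t - (i+1) + 1), s.choose ℓ)
        + (v i).card * (∑ ℓ ∈ Finset.range (t - i), s.choose ℓ) := by
    intro i hi
    have hlt : i < t := Finset.mem_range.mp hi
    have h2 : t - (i+1) + 1 = t - i := by omega
    rw [h2, ← hcard (i+1), ← hcard i]
    ring
  calc (∑ i ∈ Finset.range t,
          ((u (i+1)).card + (v i \ u i).card) * ∑ ℓ ∈ Finset.range (t - (i+1) + 1), s.choose ℓ)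
        + (u 0).card * (∑ ℓ ∈ Finset.range (t - 0 + 1), s.choose ℓ)
        + ((∑ i ∈ Finset.range t,
          ((v (i+1) \ u (i+1)).card + (u i).card) * ∑ ℓ ∈ Finset.range (t - (i+1) + 1), s.choose ℓ)
        + (v 0 \ u 0).card * (∑ ℓ ∈ Finset.range (t - 0 + 1), s.choose ℓ))
      = (∑ i ∈ Finset.range t,
          (((u (i+1)).card + (v i \ u i).card) * (∑ ℓ ∈ Finset.range (t - (i+1) + 1), s.choose ℓ)
          + ((v (i+1) \ u (i+1)).card + (u i).card) * (∑ ℓ ∈ Finset.range (t - (i+1) + 1), s.choose ℓ)))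
        + ((u 0).card + (v 0 \ u 0).card) * (∑ ℓ ∈ Finset.range (t - 0 + 1), s.choose ℓ) := by
        rw [Finset.sum_add_distrib]; ring
    _ = (∑ i ∈ Finset.range t,
          ((v (i+1)).card * (∑ ℓ ∈ Finset.range (t - (i+1) + 1), s.choose ℓ)
          + (v i).card * (∑ ℓ ∈ Finset.range (t - i), s.choose ℓ)))
        + (v 0).card * (∑ ℓ ∈ Finset.range (t - 0 + 1), s.choose ℓ) := by
        rw [Finset.sum_congr rfl e1, hcard 0]
    _ = ((∑ i ∈ Finset.range t,
          (v (i+1)).card * (∑ ℓ ∈ Finset.range (t - (i+1) + 1), s.choose ℓ))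
        + (v 0).card * (∑ ℓ ∈ Finset.range (t - 0 + 1), s.choose ℓ))
        + ∑ i ∈ Finset.range t, (v i).card * (∑ ℓ ∈ Finset.range (t - i), s.choose ℓ) := by
        rw [Finset.sum_add_distrib]; ring
end

section
/- Divisibility/congruence invariant of the Spencer weight: let A_r = gcd{C(r, t), C(r, t-1), …, C(r, t-s+1)} for appropriate s (in the paper, A_{n-i} = gcd{C(n-i, t), …, C(n-i, t-i+1)}). Then for every reachable state v_i after i answers of an (m,t,n)-game, W_{n-i}(v_i) ≡ m · ∑_{ℓ=0}^{t} C(n-i, ℓ) (mod A_{n-i}). -/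
/-- States reachable from the initial state `v0` after `i` answers. -/
inductive Reachable {α : Type*} [DecidableEq α] (v0 : ℕ → Finset α) :
    ℕ → (ℕ → Finset α) → Prop
  | init : Reachable v0 0 v0
  | yes {i : ℕ} {v u : ℕ → Finset α} (h : Reachable v0 i v) (hu : ∀ j, u j ⊆ v j) :
      Reachable v0 (i + 1) (yesState v u)
  | no {i : ℕ} {v u : ℕ → Finset α} (h : Reachable v0 i v) (hu : ∀ j, u j ⊆ v j) :
      Reachable v0 (i + 1) (noState v u)

section Aux

variable {α : Type*} [DecidableEq α]

/-- Bins beyond index `i` are empty in any state reachable after `i` answers. -/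
lemma reachable_empty {v0 : ℕ → Finset α} (h0 : ∀ j, j ≠ 0 → v0 j = ∅)
    {i : ℕ} {v : ℕ → Finset α} (h : Reachable v0 i v) :
    ∀ j, i < j → v j = ∅ := by
  induction h with
  | init => exact fun j hj => h0 j (by omega)
  | @yes i v u h hu ih =>
    intro j hj
    have h1 : v j = ∅ := ih j (by omega)
    have h2 : v (j - 1) = ∅ := ih (j - 1) (by omega)
    have h3 : u j = ∅ := Finset.subset_empty.mp (h1 ▸ hu j)
    rw [show yesState v u j = u j ∪ (v (j - 1) \ u (j - 1)) from if_neg (by omega)]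
    simp [h2, h3]
  | @no i v u h hu ih =>
    intro j hj
    have h1 : v j = ∅ := ih j (by omega)
    have h2 : v (j - 1) = ∅ := ih (j - 1) (by omega)
    have h3 : u (j - 1) = ∅ := Finset.subset_empty.mp (h2 ▸ hu (j - 1))
    rw [show noState v u j = (v j \ u j) ∪ u (j - 1) from if_neg (by omega)]
    simp [h1, h3]

/-- Generic one-step update: bin `0` becomes `b 0`, bin `j` becomes `b j ∪ a (j-1)`,
where `a j`, `b j` partition the old bin `j`.  This preserves pairwise disjointness. -/
lemma stepDisjoint (a b : ℕ → Finset α)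
    (hab : ∀ j, Disjoint (a j) (b j))
    (hd : ∀ j k, j ≠ k → Disjoint (a j ∪ b j) (a k ∪ b k)) :
    ∀ j k, j ≠ k →
      Disjoint (if j = 0 then b 0 else b j ∪ a (j - 1))
        (if k = 0 then b 0 else b k ∪ a (k - 1)) := by
  have hmem : ∀ j x, x ∈ (if j = 0 then b 0 else b j ∪ a (j - 1)) →
      x ∈ b j ∨ (j ≠ 0 ∧ x ∈ a (j - 1)) := by
    intro j x hx
    by_cases hj : j = 0
    · left; subst hj; simpa using hx
    · rw [if_neg hj, Finset.mem_union] at hx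
      rcases hx with h | h
      · exact Or.inl h
      · exact Or.inr ⟨hj, h⟩
  intro j k hjk
  rw [Finset.disjoint_left]
  intro x hxj hxk
  rcases hmem j x hxj with hj | ⟨hj0, hj⟩ <;> rcases hmem k x hxk with hk | ⟨hk0, hk⟩
  · exact Finset.disjoint_left.mp (hd j k hjk)
      (Finset.mem_union_right _ hj) (Finset.mem_union_right _ hk)
  · by_cases hjk1 : j = k - 1
    · exact Finset.disjoint_left.mp (hab (k - 1)) hk (hjk1 ▸ hj)
    · exact Finset.disjoint_left.mp (hd j (k - 1) hjk1)
        (Finset.mem_union_right _ hj) (Finset.mem_union_left _ hk)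
  · by_cases hjk1 : k = j - 1
    · exact Finset.disjoint_left.mp (hab (j - 1)) hj (hjk1 ▸ hk)
    · exact Finset.disjoint_left.mp (hd (j - 1) k (Ne.symm hjk1))
        (Finset.mem_union_left _ hj) (Finset.mem_union_right _ hk)
  · exact Finset.disjoint_left.mp (hd (j - 1) (k - 1) (by omega))
      (Finset.mem_union_left _ hj) (Finset.mem_union_left _ hk)

/-- Bins of reachable states are pairwise disjoint. -/
lemma reachable_disjoint {v0 : ℕ → Finset α}
    (h0 : ∀ j k, j ≠ k → Disjoint (v0 j) (v0 k))
    {i : ℕ} {v : ℕ → Finset α} (h : Reachable v0 i v) :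
    ∀ j k, j ≠ k → Disjoint (v j) (v k) := by
  induction h with
  | init => exact h0
  | @yes i v u h hu ih =>
    intro j k hjk
    have := stepDisjoint (fun j => v j \ u j) u (fun j => Finset.sdiff_disjoint)
      (fun j k hjk => by
        rw [Finset.sdiff_union_of_subset (hu j), Finset.sdiff_union_of_subset (hu k)]
        exact ih j k hjk) j k hjk
    simpa [yesState] using this
  | @no i v u h hu ih =>
    intro j k hjk
    have := stepDisjoint u (fun j => v j \ u j) (fun j => Finset.disjoint_sdiff)
      (fun j k hjk => by
        rw [Finset.union_sdiff_of_subset (hu j), Finset.union_sdiff_of_subset (hu k)]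
        exact ih j k hjk) j k hjk
    simpa [noState] using this

/-- Key weight identity: a one-step update decreases the Spencer weight (at the same
number `ρ` of remaining questions) by exactly `∑ j, |a j| * C(ρ, T - j)`. -/
lemma key (T ρ : ℕ) (a b : ℕ → Finset α)
    (hab : ∀ j, Disjoint (a j) (b j))
    (hd : ∀ j k, j ≠ k → Disjoint (a j ∪ b j) (a k ∪ b k)) :
    spencerWeight T ρ (fun j => if j = 0 then b 0 else b j ∪ a (j - 1))
      + ∑ j ∈ Finset.range (T + 1), (a j).card * ρ.choose (T - j)
    = spencerWeight T ρ (fun j => a j ∪ b j) := by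
  classical
  set w : ℕ → ℕ := fun j => ∑ ℓ ∈ Finset.range (T - j + 1), ρ.choose ℓ with hw
  have hW : ∀ f : ℕ → Finset α,
      spencerWeight T ρ f = ∑ j ∈ Finset.range (T + 1), (f j).card * w j := fun f => rfl
  have hcard1 : ∀ j : ℕ, (b (j + 1) ∪ a j).card = (b (j + 1)).card + (a j).card := by
    intro j
    exact Finset.card_union_of_disjoint
      ((hd (j + 1) j (by omega)).mono Finset.subset_union_right Finset.subset_union_left)
  have hcard2 : ∀ j, (a j ∪ b j).card = (a j).card + (b j).card :=
    fun j => Finset.card_union_of_disjoint (hab j)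
  have hwstep : ∀ j < T, w (j + 1) + ρ.choose (T - j) = w j := by
    intro j hj
    have h3 : T - j = T - (j + 1) + 1 := by omega
    simp only [hw]
    rw [h3, Finset.sum_range_succ, Finset.sum_range_succ, Finset.sum_range_succ]
  have hwT : w T = ρ.choose (T - T) := by simp [hw]
  rw [hW, hW]
  rw [Finset.sum_range_succ'
    (fun j => ((if j = 0 then b 0 else b j ∪ a (j - 1)).card * w j)) T]
  rw [Finset.sum_range_succ' (fun j => ((a j ∪ b j).card * w j)) T]
  rw [Finset.sum_range_succ (fun j => (a j).card * ρ.choose (T - j)) T]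
  simp only [Nat.add_eq_zero, one_ne_zero, and_false, if_false, Nat.add_sub_cancel,
    eq_self_iff_true, if_true, hcard1, hcard2]
  have key1 : ∑ j ∈ Finset.range T, (a j).card * w (j + 1)
      + ∑ j ∈ Finset.range T, (a j).card * ρ.choose (T - j)
      = ∑ j ∈ Finset.range T, (a j).card * w j := by
    rw [← Finset.sum_add_distrib]
    exact Finset.sum_congr rfl fun j hj => by
      rw [← Nat.mul_add, hwstep j (Finset.mem_range.mp hj)]
  have key2 : ∑ j ∈ Finset.range T, (a j).card * w j + (a T).card * ρ.choose (T - T)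
      = ∑ j ∈ Finset.range T, (a (j + 1)).card * w (j + 1) + (a 0).card * w 0 := by
    rw [← hwT, ← Finset.sum_range_succ, Finset.sum_range_succ']
  simp only [add_mul, Finset.sum_add_distrib]
  linarith [key1, key2]

/-- Main invariant, for an arbitrary number `ρ` of remaining questions. -/
lemma main_aux (m t : ℕ) (S : Finset α) (hS : S.card = m)
    {i : ℕ} {v : ℕ → Finset α}
    (hv : Reachable (fun j => if j = 0 then S else ∅) i v) (ρ : ℕ) :
    spencerWeight t ρ v ≡ m * ∑ ℓ ∈ Finset.range (t + 1), ρ.choose ℓ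
      [MOD (Finset.range i).gcd (fun s => ρ.choose (t - s))] := by
  have h0e : ∀ j, j ≠ 0 → (fun j => if j = 0 then S else (∅ : Finset α)) j = ∅ :=
    fun j hj => if_neg hj
  have h0d : ∀ j k, j ≠ k → Disjoint ((fun j => if j = 0 then S else (∅ : Finset α)) j)
      ((fun j => if j = 0 then S else (∅ : Finset α)) k) := by
    intro j k hjk
    by_cases hj : j = 0
    · simp [hj, if_neg (show k ≠ 0 by omega)]
    · simp [if_neg hj]
  induction hv with
  | init =>
    have heq : spencerWeight t ρ (fun j => if j = 0 then S else ∅)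
        = m * ∑ ℓ ∈ Finset.range (t + 1), ρ.choose ℓ := by
      simp only [spencerWeight]
      rw [Finset.sum_eq_single 0]
      · simp [hS]
      · intro j _ hj0; simp [if_neg hj0]
      · intro h; exact absurd (Finset.mem_range.mpr (by omega)) h
    simp [heq, Nat.ModEq]
  | @yes i v u h hu ih =>
    have hemp : ∀ j, i < j → v j = ∅ := reachable_empty h0e h
    have hdis : ∀ j k, j ≠ k → Disjoint (v j) (v k) := reachable_disjoint h0d h
    have hkey : spencerWeight t ρ (yesState v u)
        + ∑ j ∈ Finset.range (t + 1), (v j \ u j).card * ρ.choose (t - j)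
        = spencerWeight t ρ (fun j => (v j \ u j) ∪ u j) :=
      key t ρ (fun j => v j \ u j) u (fun j => Finset.sdiff_disjoint)
        (fun j k hjk => by
          rw [Finset.sdiff_union_of_subset (hu j), Finset.sdiff_union_of_subset (hu k)]
          exact hdis j k hjk)
    have hrw : spencerWeight t ρ (fun j => (v j \ u j) ∪ u j) = spencerWeight t ρ v := by
      congr 1
      exact funext fun j => Finset.sdiff_union_of_subset (hu j)
    rw [hrw] at hkey
    have hdvd : ((Finset.range (i + 1)).gcd fun s => ρ.choose (t - s)) ∣
        ∑ j ∈ Finset.range (t + 1), (v j \ u j).card * ρ.choose (t - j) := by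
      refine Finset.dvd_sum fun j hj => ?_
      by_cases hji : j ≤ i
      · exact Dvd.dvd.mul_left (Finset.gcd_dvd (Finset.mem_range.mpr (by omega))) _
      · have : v j = ∅ := hemp j (by omega)
        simp [this]
    have hdd : ((Finset.range (i + 1)).gcd fun s => ρ.choose (t - s)) ∣
        ((Finset.range i).gcd fun s => ρ.choose (t - s)) :=
      Finset.dvd_gcd fun s hs =>
        Finset.gcd_dvd (Finset.mem_range.mpr (by
          have := Finset.mem_range.mp hs; omega))
    have h1 : spencerWeight t ρ (yesState v u) ≡ spencerWeight t ρ v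
        [MOD (Finset.range (i + 1)).gcd fun s => ρ.choose (t - s)] := by
      have h0 : (0 : ℕ) ≡ ∑ j ∈ Finset.range (t + 1), (v j \ u j).card * ρ.choose (t - j)
          [MOD (Finset.range (i + 1)).gcd fun s => ρ.choose (t - s)] :=
        (Nat.modEq_zero_iff_dvd.mpr hdvd).symm
      calc spencerWeight t ρ (yesState v u)
          = spencerWeight t ρ (yesState v u) + 0 := (add_zero _).symm
        _ ≡ spencerWeight t ρ (yesState v u)
            + ∑ j ∈ Finset.range (t + 1), (v j \ u j).card * ρ.choose (t - j)
            [MOD _] := Nat.ModEq.add_left _ h0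
        _ = spencerWeight t ρ v := hkey
    exact h1.trans (Nat.ModEq.of_dvd hdd ih)
  | @no i v u h hu ih =>
    have hemp : ∀ j, i < j → v j = ∅ := reachable_empty h0e h
    have hdis : ∀ j k, j ≠ k → Disjoint (v j) (v k) := reachable_disjoint h0d h
    have hkey : spencerWeight t ρ (noState v u)
        + ∑ j ∈ Finset.range (t + 1), (u j).card * ρ.choose (t - j)
        = spencerWeight t ρ (fun j => u j ∪ (v j \ u j)) :=
      key t ρ u (fun j => v j \ u j) (fun j => Finset.disjoint_sdiff)
        (fun j k hjk => by
          rw [Finset.union_sdiff_of_subset (hu j), Finset.union_sdiff_of_subset (hu k)]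
          exact hdis j k hjk)
    have hrw : spencerWeight t ρ (fun j => u j ∪ (v j \ u j)) = spencerWeight t ρ v := by
      congr 1
      exact funext fun j => Finset.union_sdiff_of_subset (hu j)
    rw [hrw] at hkey
    have hdvd : ((Finset.range (i + 1)).gcd fun s => ρ.choose (t - s)) ∣
        ∑ j ∈ Finset.range (t + 1), (u j).card * ρ.choose (t - j) := by
      refine Finset.dvd_sum fun j hj => ?_
      by_cases hji : j ≤ i
      · exact Dvd.dvd.mul_left (Finset.gcd_dvd (Finset.mem_range.mpr (by omega))) _
      · have hvj : v j = ∅ := hemp j (by omega)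
        have : u j = ∅ := Finset.subset_empty.mp (hvj ▸ hu j)
        simp [this]
    have hdd : ((Finset.range (i + 1)).gcd fun s => ρ.choose (t - s)) ∣
        ((Finset.range i).gcd fun s => ρ.choose (t - s)) :=
      Finset.dvd_gcd fun s hs =>
        Finset.gcd_dvd (Finset.mem_range.mpr (by
          have := Finset.mem_range.mp hs; omega))
    have h1 : spencerWeight t ρ (noState v u) ≡ spencerWeight t ρ v
        [MOD (Finset.range (i + 1)).gcd fun s => ρ.choose (t - s)] := by
      have h0 : (0 : ℕ) ≡ ∑ j ∈ Finset.range (t + 1), (u j).card * ρ.choose (t - j)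
          [MOD (Finset.range (i + 1)).gcd fun s => ρ.choose (t - s)] :=
        (Nat.modEq_zero_iff_dvd.mpr hdvd).symm
      calc spencerWeight t ρ (noState v u)
          = spencerWeight t ρ (noState v u) + 0 := (add_zero _).symm
        _ ≡ spencerWeight t ρ (noState v u)
            + ∑ j ∈ Finset.range (t + 1), (u j).card * ρ.choose (t - j)
            [MOD _] := Nat.ModEq.add_left _ h0
        _ = spencerWeight t ρ v := hkey
    exact h1.trans (Nat.ModEq.of_dvd hdd ih)

end Aux

/-- Congruence invariant of the Spencer weight: after `i` answers of an
`(m,t,n)`-game, with `A_{n-i} = gcd{C(n-i,t), …, C(n-i,t-i+1)}`, the Spencer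
weight of any reachable state is congruent to `m · ∑_{ℓ=0}^t C(n-i,ℓ)` mod `A_{n-i}`. -/
theorem spencer_weight_congruence {α : Type*} [DecidableEq α] (m t n : ℕ)
    (S : Finset α) (hS : S.card = m)
    (i : ℕ) (hi : i ≤ n) (v : ℕ → Finset α)
    (hv : Reachable (fun j => if j = 0 then S else ∅) i v) :
    spencerWeight t (n - i) v
      ≡ m * ∑ ℓ ∈ Finset.range (t + 1), (n - i).choose ℓ
        [MOD (Finset.range i).gcd (fun s => (n - i).choose (t - s))] := by
  exact main_aux m t S hS hv (n - i)
end
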